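/- Let T = Alt(n) with n ≥ 5 odd, a = (1 2)(3 4) and b = (1 2 … n). Then a is an involution, b and ab have odd order, ⟨a, b⟩ = T, and moreover the set S = {ab, ba, (ab)⁻¹, (ba)⁻¹} has cardinality 4 and satisfies ⟨S⟩ = ⟨S²⟩ = T, where S² = {st : s, t ∈ S}. -/

import Mathlib

open Equiv Equiv.Perm Subgroup

private lemma odd_of_dvd_odd {d k : ℕ} (hdvd : d ∣ k) (hk : Odd k) : Odd d := by
  rcases Nat.even_or_odd d with he | ho
  · exfalso
    obtain ⟨e, rfl⟩ := he
    obtain ⟨f, rfl⟩ := hdvd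
    exact (Nat.not_odd_iff_even.mpr ⟨e * f, by ring⟩) hk
  · exact ho

private lemma norm_of_gens {G : Type*} [Group G] (t : G) (ht : t * t = 1) (S : Set G)
    (hg : ∀ s ∈ S, t * s * t ∈ Subgroup.closure S) :
    ∀ g ∈ Subgroup.closure S, t * g * t ∈ Subgroup.closure S := by
  intro g hgmem
  induction hgmem using Subgroup.closure_induction with
  | mem x hx => exact hg x hx
  | one => rw [mul_one, ht]; exact one_mem _
  | mul x y hx hy px py =>
    have e : (t*x*t)*(t*y*t) = t*(x*y)*t := by
      rw [show (t*x*t)*(t*y*t) = t*x*(t*t)*(y*t) from by group, ht]; group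
    rw [← e]; exact mul_mem px py
  | inv x hx px =>
    have htinv : t⁻¹ = t := inv_eq_of_mul_eq_one_right ht
    have e : (t*x*t)⁻¹ = t*x⁻¹*t := by rw [mul_inv_rev, mul_inv_rev, htinv]; group
    rw [← e]; exact inv_mem px

private lemma coset_trick {G : Type*} [Group G] (H : Subgroup G) (t : G) (ht : t * t = 1)
    (hN : ∀ h ∈ H, t * h * t ∈ H) {S : Set G} (hgen : ∀ s ∈ S, s ∈ H ∨ s * t ∈ H) :
    ∀ g ∈ Subgroup.closure S, g ∈ H ∨ g * t ∈ H := by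
  intro g hg
  induction hg using Subgroup.closure_induction with
  | mem x hx => exact hgen x hx
  | one => exact Or.inl H.one_mem
  | mul x y hx hy px py =>
    rcases px with px | px <;> rcases py with py | py
    · exact Or.inl (mul_mem px py)
    · exact Or.inr (by rw [mul_assoc]; exact mul_mem px py)
    · refine Or.inr ?_
      have e : (x*t)*(t*y*t) = (x*y)*t := by
        rw [show (x*t)*(t*y*t) = x*(t*t)*(y*t) from by group, ht]; group
      rw [← e]; exact mul_mem px (hN y py)
    · refine Or.inl ?_
      have h1 : t * (y*t) * t ∈ H := hN _ py
      have e1 : t * (y*t) * t = t*y := by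
        rw [show t*(y*t)*t = (t*y)*(t*t) from by group, ht, mul_one]
      rw [e1] at h1
      have e2 : (x*t)*(t*y) = x*y := by
        rw [show (x*t)*(t*y) = x*(t*t)*y from by group, ht]; group
      rw [← e2]; exact mul_mem px h1
  | inv x hx px =>
    rcases px with px | px
    · exact Or.inl (inv_mem px)
    · refine Or.inr ?_
      have h1 : t * (x*t) * t ∈ H := hN _ px
      have e1 : t * (x*t) * t = t*x := by
        rw [show t*(x*t)*t = (t*x)*(t*t) from by group, ht, mul_one]
      rw [e1] at h1
      have htinv : t⁻¹ = t := inv_eq_of_mul_eq_one_right ht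
      have e2 : (t*x)⁻¹ = x⁻¹ * t := by rw [mul_inv_rev, htinv]
      rw [← e2]; exact inv_mem h1

open scoped Pointwise
open Fin.NatCast

theorem stmt_18 (n : ℕ) (hn : 5 ≤ n) (hodd : Odd n)
    (a b : Equiv.Perm (Fin n))
    -- a = (1 2)(3 4)
    (ha : a = Equiv.swap (⟨0, by omega⟩ : Fin n) ⟨1, by omega⟩ *
              Equiv.swap (⟨2, by omega⟩ : Fin n) ⟨3, by omega⟩)
    -- b = (1 2 ... n)
    (hb : b = finRotate n)
    (S : Set (Equiv.Perm (Fin n)))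
    (hS : S = {a * b, b * a, (a * b)⁻¹, (b * a)⁻¹}) :
    a ^ 2 = 1 ∧ a ≠ 1 ∧
    Odd (orderOf b) ∧ Odd (orderOf (a * b)) ∧
    Subgroup.closure {a, b} = alternatingGroup (Fin n) ∧
    S.ncard = 4 ∧
    Subgroup.closure S = alternatingGroup (Fin n) ∧
    Subgroup.closure (S * S) = alternatingGroup (Fin n) := by
  obtain ⟨m, rfl⟩ : ∃ m, n = m + 2 := ⟨n - 2, by omega⟩
  have hm : 3 ≤ m := by omega
  obtain ⟨r, hr⟩ := hodd
  -- ===== cast infrastructure =====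
  have hcv : ∀ k : ℕ, k < m + 2 → ((k : Fin (m+2)) : ℕ) = k := fun k hk => Fin.val_cast_of_lt hk
  have hcne : ∀ j k : ℕ, j < m+2 → k < m+2 → j ≠ k →
      ((j:ℕ) : Fin (m+2)) ≠ ((k:ℕ) : Fin (m+2)) := by
    intro j k hj hk hjk hh
    rw [Fin.ext_iff, hcv j hj, hcv k hk] at hh; exact hjk hh
  have hcwrap : ∀ j : ℕ, ((j + (m+2) : ℕ) : Fin (m+2)) = ((j:ℕ) : Fin (m+2)) := by
    intro j; rw [Nat.cast_add, Fin.natCast_self, add_zero]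
  have hmk : ∀ (k : ℕ) (h : k < m+2), (⟨k, h⟩ : Fin (m+2)) = ((k:ℕ) : Fin (m+2)) := by
    intro k h; apply Fin.ext; rw [hcv k h]
  have hcc : ∀ j k : ℕ, j = k → ((j:ℕ) : Fin (m+2)) = ((k:ℕ) : Fin (m+2)) :=
    fun j k h => congrArg _ h
  -- ===== a and b evaluation =====
  have ha' : a = Equiv.swap ((0:ℕ) : Fin (m+2)) ((1:ℕ) : Fin (m+2)) *
      Equiv.swap ((2:ℕ) : Fin (m+2)) ((3:ℕ) : Fin (m+2)) := by
    rw [ha]; simp only [hmk]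
  have hbap : ∀ x : Fin (m+2), b x = x + 1 := by
    intro x; rw [hb]; exact finRotate_succ_apply x
  have hbc : ∀ k : ℕ, b ((k:ℕ) : Fin (m+2)) = ((k+1 : ℕ) : Fin (m+2)) := by
    intro k; rw [hbap, Nat.cast_add, Nat.cast_one]
  have ha_0 : a ((0:ℕ) : Fin (m+2)) = ((1:ℕ) : Fin (m+2)) := by
    rw [ha', Equiv.Perm.mul_apply,
      Equiv.swap_apply_of_ne_of_ne (hcne 0 2 (by omega) (by omega) (by omega))
        (hcne 0 3 (by omega) (by omega) (by omega)),
      Equiv.swap_apply_left]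
  have ha_1 : a ((1:ℕ) : Fin (m+2)) = ((0:ℕ) : Fin (m+2)) := by
    rw [ha', Equiv.Perm.mul_apply,
      Equiv.swap_apply_of_ne_of_ne (hcne 1 2 (by omega) (by omega) (by omega))
        (hcne 1 3 (by omega) (by omega) (by omega)),
      Equiv.swap_apply_right]
  have ha_2 : a ((2:ℕ) : Fin (m+2)) = ((3:ℕ) : Fin (m+2)) := by
    rw [ha', Equiv.Perm.mul_apply, Equiv.swap_apply_left,
      Equiv.swap_apply_of_ne_of_ne (hcne 3 0 (by omega) (by omega) (by omega))
        (hcne 3 1 (by omega) (by omega) (by omega))]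
  have ha_3 : a ((3:ℕ) : Fin (m+2)) = ((2:ℕ) : Fin (m+2)) := by
    rw [ha', Equiv.Perm.mul_apply, Equiv.swap_apply_right,
      Equiv.swap_apply_of_ne_of_ne (hcne 2 0 (by omega) (by omega) (by omega))
        (hcne 2 1 (by omega) (by omega) (by omega))]
  have ha_ge : ∀ k : ℕ, 4 ≤ k → k ≤ m+1 → a ((k:ℕ) : Fin (m+2)) = ((k:ℕ) : Fin (m+2)) := by
    intro k h4 hk
    rw [ha', Equiv.Perm.mul_apply,
      Equiv.swap_apply_of_ne_of_ne (hcne k 2 (by omega) (by omega) (by omega))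
        (hcne k 3 (by omega) (by omega) (by omega)),
      Equiv.swap_apply_of_ne_of_ne (hcne k 0 (by omega) (by omega) (by omega))
        (hcne k 1 (by omega) (by omega) (by omega))]
  have hbpow : ∀ (k : ℕ) (x : Fin (m+2)), (b ^ k) x = x + ((k:ℕ) : Fin (m+2)) := by
    intro k
    induction k with
    | zero => intro x; rw [pow_zero, Equiv.Perm.one_apply, Nat.cast_zero, add_zero]
    | succ k ih =>
      intro x
      rw [pow_succ, Equiv.Perm.mul_apply, hbap, ih, Nat.cast_add, Nat.cast_one]
      rw [add_assoc, add_comm (1 : Fin (m+2))]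
  -- ===== a² = 1 and a ≠ 1 =====
  have htt : Equiv.swap ((0:ℕ) : Fin (m+2)) ((1:ℕ) : Fin (m+2)) *
      Equiv.swap ((0:ℕ) : Fin (m+2)) ((1:ℕ) : Fin (m+2)) = 1 := Equiv.swap_mul_self _ _
  have hconj23 : Equiv.swap ((0:ℕ) : Fin (m+2)) ((1:ℕ) : Fin (m+2)) *
      Equiv.swap ((2:ℕ) : Fin (m+2)) ((3:ℕ) : Fin (m+2)) *
      Equiv.swap ((0:ℕ) : Fin (m+2)) ((1:ℕ) : Fin (m+2)) =
      Equiv.swap ((2:ℕ) : Fin (m+2)) ((3:ℕ) : Fin (m+2)) := by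
    have h1 := (Equiv.swap_apply_apply (Equiv.swap ((0:ℕ) : Fin (m+2)) ((1:ℕ) : Fin (m+2)))
        ((2:ℕ) : Fin (m+2)) ((3:ℕ) : Fin (m+2))).symm
    rw [Equiv.swap_inv,
      Equiv.swap_apply_of_ne_of_ne (hcne 2 0 (by omega) (by omega) (by omega))
        (hcne 2 1 (by omega) (by omega) (by omega)),
      Equiv.swap_apply_of_ne_of_ne (hcne 3 0 (by omega) (by omega) (by omega))
        (hcne 3 1 (by omega) (by omega) (by omega))] at h1
    exact h1
  have part1 : a ^ 2 = 1 := by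
    rw [pow_two, ha']
    calc Equiv.swap ((0:ℕ) : Fin (m+2)) ((1:ℕ) : Fin (m+2)) *
          Equiv.swap ((2:ℕ) : Fin (m+2)) ((3:ℕ) : Fin (m+2)) *
          (Equiv.swap ((0:ℕ) : Fin (m+2)) ((1:ℕ) : Fin (m+2)) *
          Equiv.swap ((2:ℕ) : Fin (m+2)) ((3:ℕ) : Fin (m+2)))
        = (Equiv.swap ((0:ℕ) : Fin (m+2)) ((1:ℕ) : Fin (m+2)) *
          Equiv.swap ((2:ℕ) : Fin (m+2)) ((3:ℕ) : Fin (m+2)) *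
          Equiv.swap ((0:ℕ) : Fin (m+2)) ((1:ℕ) : Fin (m+2))) *
          Equiv.swap ((2:ℕ) : Fin (m+2)) ((3:ℕ) : Fin (m+2)) := by group
      _ = 1 := by rw [hconj23, Equiv.swap_mul_self]
  have haa : a * a = 1 := by rw [← pow_two]; exact part1
  have hainv : a⁻¹ = a := inv_eq_of_mul_eq_one_right haa
  have part2 : a ≠ 1 := by
    intro h
    have h0 : a ((0:ℕ) : Fin (m+2)) = ((0:ℕ) : Fin (m+2)) := by rw [h]; rfl
    rw [ha_0] at h0
    exact hcne 1 0 (by omega) (by omega) (by omega) h0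
  -- ===== order of b =====
  have hbn : b ^ (m+2) = 1 := by
    apply Equiv.ext
    intro x
    rw [hbpow, Fin.natCast_self, add_zero, Equiv.Perm.one_apply]
  have part3 : Odd (orderOf b) :=
    odd_of_dvd_odd (orderOf_dvd_of_pow_eq_one hbn) ⟨r, hr⟩
  -- ===== order of a*b =====
  have hab0 : (a*b) ((0:ℕ) : Fin (m+2)) = ((0:ℕ) : Fin (m+2)) := by
    rw [Equiv.Perm.mul_apply, hbc 0]; exact ha_1
  have hab1 : (a*b) ((1:ℕ) : Fin (m+2)) = ((3:ℕ) : Fin (m+2)) := by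
    rw [Equiv.Perm.mul_apply, hbc 1]; exact ha_2
  have hab2 : (a*b) ((2:ℕ) : Fin (m+2)) = ((2:ℕ) : Fin (m+2)) := by
    rw [Equiv.Perm.mul_apply, hbc 2]; exact ha_3
  have habmid : ∀ k : ℕ, 3 ≤ k → k ≤ m → (a*b) ((k:ℕ) : Fin (m+2)) = ((k+1:ℕ) : Fin (m+2)) := by
    intro k h3 hk
    rw [Equiv.Perm.mul_apply, hbc k]
    exact ha_ge (k+1) (by omega) (by omega)
  have hablast : (a*b) ((m+1:ℕ) : Fin (m+2)) = ((1:ℕ) : Fin (m+2)) := by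
    rw [Equiv.Perm.mul_apply, hbc (m+1), hcc (m+1+1) (0+(m+2)) (by omega), hcwrap]
    exact ha_0
  have hfix : ∀ (g : Equiv.Perm (Fin (m+2))) (x : Fin (m+2)), g x = x → ∀ k : ℕ, (g^k) x = x := by
    intro g x hx k
    induction k with
    | zero => rw [pow_zero, Equiv.Perm.one_apply]
    | succ k ih => rw [pow_succ, Equiv.Perm.mul_apply, hx, ih]
  have F : ∀ k : ℕ, k ≤ m - 2 → ((a*b)^(k+1)) ((1:ℕ) : Fin (m+2)) = ((k+3:ℕ) : Fin (m+2)) := by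
    intro k
    induction k with
    | zero => intro _; rw [pow_one]; exact hab1
    | succ k ih =>
      intro hk
      rw [pow_succ', Equiv.Perm.mul_apply, ih (by omega)]
      rw [show (k+1)+3 = (k+3)+1 from by omega]
      exact habmid (k+3) (by omega) (by omega)
  have hpow1 : ((a*b)^m) ((1:ℕ) : Fin (m+2)) = ((1:ℕ) : Fin (m+2)) := by
    have h1 : ((a*b)^(((m-2)+1)+1)) ((1:ℕ) : Fin (m+2)) = ((1:ℕ) : Fin (m+2)) := by
      rw [pow_succ', Equiv.Perm.mul_apply, F (m-2) (by omega),
        hcc ((m-2)+3) (m+1) (by omega)]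
      exact hablast
    rw [show ((m-2)+1)+1 = m from by omega] at h1
    exact h1
  have hpowm : (a*b)^m = 1 := by
    apply Equiv.ext
    intro x
    rw [Equiv.Perm.one_apply]
    have hx : x = ((x.val : ℕ) : Fin (m+2)) := (Fin.cast_val_eq_self x).symm
    rw [hx]
    have hvlt : x.val < m + 2 := x.isLt
    set v : ℕ := x.val with hv
    rcases Nat.lt_or_ge v 3 with hv3 | hv3
    · interval_cases v
      · exact hfix _ _ hab0 m
      · exact hpow1
      · exact hfix _ _ hab2 m
    · -- 3 ≤ v ≤ m+1
      have hFv : ((a*b)^(v-2)) ((1:ℕ) : Fin (m+2)) = ((v:ℕ) : Fin (m+2)) := by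
        rw [show v-2 = (v-3)+1 from by omega, F (v-3) (by omega), show (v-3)+3 = v from by omega]
      calc ((a*b)^m) ((v:ℕ) : Fin (m+2))
          = ((a*b)^m) (((a*b)^(v-2)) ((1:ℕ) : Fin (m+2))) := by rw [hFv]
        _ = ((a*b)^(m+(v-2))) ((1:ℕ) : Fin (m+2)) := by rw [pow_add, Equiv.Perm.mul_apply]
        _ = ((a*b)^((v-2)+m)) ((1:ℕ) : Fin (m+2)) := by rw [Nat.add_comm m (v-2)]
        _ = ((a*b)^(v-2)) (((a*b)^m) ((1:ℕ) : Fin (m+2))) := by rw [pow_add, Equiv.Perm.mul_apply]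
        _ = ((a*b)^(v-2)) ((1:ℕ) : Fin (m+2)) := by rw [hpow1]
        _ = ((v:ℕ) : Fin (m+2)) := hFv
  have part4 : Odd (orderOf (a*b)) :=
    odd_of_dvd_odd (orderOf_dvd_of_pow_eq_one hpowm) ⟨r-1, by omega⟩
  -- ===== generation: closure {a, b} = alternatingGroup =====
  have haH : a ∈ Subgroup.closure ({a, b} : Set (Equiv.Perm (Fin (m+2)))) :=
    Subgroup.subset_closure (Set.mem_insert _ _)
  have hbH : b ∈ Subgroup.closure ({a, b} : Set (Equiv.Perm (Fin (m+2)))) :=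
    Subgroup.subset_closure (Set.mem_insert_of_mem _ rfl)
  have hbkc : ∀ k j : ℕ, (b^k) ((j:ℕ) : Fin (m+2)) = ((j+k:ℕ) : Fin (m+2)) := by
    intro k j; rw [hbpow k, ← Nat.cast_add]
  have hC : ∀ k : ℕ,
      Equiv.swap ((k:ℕ) : Fin (m+2)) ((k+1:ℕ) : Fin (m+2)) *
      Equiv.swap ((k+2:ℕ) : Fin (m+2)) ((k+3:ℕ) : Fin (m+2)) ∈
      Subgroup.closure ({a, b} : Set (Equiv.Perm (Fin (m+2)))) := by
    intro k
    have h1 : b^k * a * (b^k)⁻¹ ∈ Subgroup.closure ({a, b} : Set (Equiv.Perm (Fin (m+2)))) :=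
      mul_mem (mul_mem (pow_mem hbH k) haH) (inv_mem (pow_mem hbH k))
    have e : b^k * a * (b^k)⁻¹ =
        Equiv.swap ((b^k) ((0:ℕ) : Fin (m+2))) ((b^k) ((1:ℕ) : Fin (m+2))) *
        Equiv.swap ((b^k) ((2:ℕ) : Fin (m+2))) ((b^k) ((3:ℕ) : Fin (m+2))) := by
      rw [Equiv.swap_apply_apply, Equiv.swap_apply_apply, ha']
      group
    rw [e, hbkc k 0, hbkc k 1, hbkc k 2, hbkc k 3,
      hcc (0+k) k (by omega), hcc (1+k) (k+1) (by omega),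
      hcc (2+k) (k+2) (by omega), hcc (3+k) (k+3) (by omega)] at h1
    exact h1
  have hT : ∀ j : ℕ,
      Equiv.swap ((0:ℕ) : Fin (m+2)) ((1:ℕ) : Fin (m+2)) *
      Equiv.swap ((2*j:ℕ) : Fin (m+2)) ((2*j+1:ℕ) : Fin (m+2)) ∈
      Subgroup.closure ({a, b} : Set (Equiv.Perm (Fin (m+2)))) := by
    intro j
    induction j with
    | zero =>
      rw [hcc (2*0) 0 (by omega), hcc (2*0+1) 1 (by omega), Equiv.swap_mul_self]
      exact one_mem _
    | succ j ih =>
      have h2 := mul_mem ih (hC (2*j))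
      have e : (Equiv.swap ((0:ℕ) : Fin (m+2)) ((1:ℕ) : Fin (m+2)) *
            Equiv.swap ((2*j:ℕ) : Fin (m+2)) ((2*j+1:ℕ) : Fin (m+2))) *
          (Equiv.swap ((2*j:ℕ) : Fin (m+2)) ((2*j+1:ℕ) : Fin (m+2)) *
            Equiv.swap ((2*j+2:ℕ) : Fin (m+2)) ((2*j+3:ℕ) : Fin (m+2))) =
          Equiv.swap ((0:ℕ) : Fin (m+2)) ((1:ℕ) : Fin (m+2)) *
            Equiv.swap ((2*j+2:ℕ) : Fin (m+2)) ((2*j+3:ℕ) : Fin (m+2)) := by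
        rw [mul_assoc, ← mul_assoc (Equiv.swap ((2*j:ℕ) : Fin (m+2)) ((2*j+1:ℕ) : Fin (m+2))),
          Equiv.swap_mul_self, one_mul]
      rw [e] at h2
      rw [hcc (2*(j+1)) (2*j+2) (by omega), hcc (2*(j+1)+1) (2*j+3) (by omega)]
      exact h2
  have hg12 : Equiv.swap ((0:ℕ) : Fin (m+2)) ((1:ℕ) : Fin (m+2)) *
      Equiv.swap ((1:ℕ) : Fin (m+2)) ((2:ℕ) : Fin (m+2)) ∈
      Subgroup.closure ({a, b} : Set (Equiv.Perm (Fin (m+2)))) := by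
    have h2 := hT (r+1)
    rw [hcc (2*(r+1)+1) (2+(m+2)) (by omega), hcc (2*(r+1)) (1+(m+2)) (by omega),
      hcwrap, hcwrap] at h2
    exact h2
  have hcomm : Equiv.swap ((2:ℕ) : Fin (m+2)) ((3:ℕ) : Fin (m+2)) *
      Equiv.swap ((0:ℕ) : Fin (m+2)) ((1:ℕ) : Fin (m+2)) =
      Equiv.swap ((0:ℕ) : Fin (m+2)) ((1:ℕ) : Fin (m+2)) *
      Equiv.swap ((2:ℕ) : Fin (m+2)) ((3:ℕ) : Fin (m+2)) := by
    have h4 := congrArg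
      (fun z => z * Equiv.swap ((0:ℕ) : Fin (m+2)) ((1:ℕ) : Fin (m+2))) hconj23
    rw [show (Equiv.swap ((0:ℕ) : Fin (m+2)) ((1:ℕ) : Fin (m+2)) *
          Equiv.swap ((2:ℕ) : Fin (m+2)) ((3:ℕ) : Fin (m+2)) *
          Equiv.swap ((0:ℕ) : Fin (m+2)) ((1:ℕ) : Fin (m+2))) *
          Equiv.swap ((0:ℕ) : Fin (m+2)) ((1:ℕ) : Fin (m+2)) =
          Equiv.swap ((0:ℕ) : Fin (m+2)) ((1:ℕ) : Fin (m+2)) *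
          Equiv.swap ((2:ℕ) : Fin (m+2)) ((3:ℕ) : Fin (m+2)) *
          (Equiv.swap ((0:ℕ) : Fin (m+2)) ((1:ℕ) : Fin (m+2)) *
          Equiv.swap ((0:ℕ) : Fin (m+2)) ((1:ℕ) : Fin (m+2))) from by group,
      htt, mul_one] at h4
    exact h4.symm
  have htat : Equiv.swap ((0:ℕ) : Fin (m+2)) ((1:ℕ) : Fin (m+2)) * a *
      Equiv.swap ((0:ℕ) : Fin (m+2)) ((1:ℕ) : Fin (m+2)) = a := by
    rw [ha']
    rw [show Equiv.swap ((0:ℕ) : Fin (m+2)) ((1:ℕ) : Fin (m+2)) *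
          (Equiv.swap ((0:ℕ) : Fin (m+2)) ((1:ℕ) : Fin (m+2)) *
          Equiv.swap ((2:ℕ) : Fin (m+2)) ((3:ℕ) : Fin (m+2))) *
          Equiv.swap ((0:ℕ) : Fin (m+2)) ((1:ℕ) : Fin (m+2)) =
          (Equiv.swap ((0:ℕ) : Fin (m+2)) ((1:ℕ) : Fin (m+2)) *
          Equiv.swap ((0:ℕ) : Fin (m+2)) ((1:ℕ) : Fin (m+2))) *
          (Equiv.swap ((2:ℕ) : Fin (m+2)) ((3:ℕ) : Fin (m+2)) *
          Equiv.swap ((0:ℕ) : Fin (m+2)) ((1:ℕ) : Fin (m+2))) from by group,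
      htt, one_mul, hcomm]
  have htbt : Equiv.swap ((0:ℕ) : Fin (m+2)) ((1:ℕ) : Fin (m+2)) * b *
      Equiv.swap ((0:ℕ) : Fin (m+2)) ((1:ℕ) : Fin (m+2)) ∈
      Subgroup.closure ({a, b} : Set (Equiv.Perm (Fin (m+2)))) := by
    have e : b * Equiv.swap ((0:ℕ) : Fin (m+2)) ((1:ℕ) : Fin (m+2)) * b⁻¹ =
        Equiv.swap ((1:ℕ) : Fin (m+2)) ((2:ℕ) : Fin (m+2)) := by
      rw [← Equiv.swap_apply_apply, hbc 0, hbc 1]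
    have e2 : Equiv.swap ((0:ℕ) : Fin (m+2)) ((1:ℕ) : Fin (m+2)) * b *
        Equiv.swap ((0:ℕ) : Fin (m+2)) ((1:ℕ) : Fin (m+2)) =
        (Equiv.swap ((0:ℕ) : Fin (m+2)) ((1:ℕ) : Fin (m+2)) *
        (b * Equiv.swap ((0:ℕ) : Fin (m+2)) ((1:ℕ) : Fin (m+2)) * b⁻¹)) * b := by group
    rw [e2, e]
    exact mul_mem hg12 hbH
  have hNt : ∀ h ∈ Subgroup.closure ({a, b} : Set (Equiv.Perm (Fin (m+2)))),
      Equiv.swap ((0:ℕ) : Fin (m+2)) ((1:ℕ) : Fin (m+2)) * h *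
      Equiv.swap ((0:ℕ) : Fin (m+2)) ((1:ℕ) : Fin (m+2)) ∈
      Subgroup.closure ({a, b} : Set (Equiv.Perm (Fin (m+2)))) := by
    apply norm_of_gens _ htt
    intro s hs
    simp only [Set.mem_insert_iff, Set.mem_singleton_iff] at hs
    rcases hs with rfl | rfl
    · rw [htat]; exact haH
    · exact htbt
  have hsa : Equiv.Perm.sign a = 1 := by
    rw [ha', map_mul, Equiv.Perm.sign_swap (hcne 0 1 (by omega) (by omega) (by omega)),
      Equiv.Perm.sign_swap (hcne 2 3 (by omega) (by omega) (by omega))]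
    decide
  have hsb : Equiv.Perm.sign b = 1 := by
    rw [hb]
    have h1 : Equiv.Perm.sign (finRotate (m+1+1)) = (-1)^(m+1) := by
      rw [sign_finRotate, Nat.add_sub_cancel]
    rw [show m+1+1 = m+2 from rfl] at h1
    rw [h1]
    exact Even.neg_one_pow ⟨r, by omega⟩
  have hHle : Subgroup.closure ({a, b} : Set (Equiv.Perm (Fin (m+2)))) ≤
      alternatingGroup (Fin (m+2)) := by
    refine (Subgroup.closure_le _).mpr ?_
    intro x hx
    simp only [Set.mem_insert_iff, Set.mem_singleton_iff] at hx
    rcases hx with rfl | rfl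
    · exact Equiv.Perm.mem_alternatingGroup.mpr hsa
    · exact Equiv.Perm.mem_alternatingGroup.mpr hsb
  have htop : Subgroup.closure
      ({a, b, Equiv.swap ((0:ℕ) : Fin (m+2)) ((1:ℕ) : Fin (m+2))} :
        Set (Equiv.Perm (Fin (m+2)))) = ⊤ := by
    have h1 : Equiv.Perm.IsCycle b := by rw [hb]; exact isCycle_finRotate
    have h2 : b.support = Finset.univ := by rw [hb]; exact support_finRotate
    have h3 := Equiv.Perm.closure_cycle_adjacent_swap h1 h2 ((0:ℕ) : Fin (m+2))
    rw [hbc 0] at h3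
    rw [eq_top_iff, ← h3]
    apply Subgroup.closure_mono
    intro x hx
    simp only [Set.mem_insert_iff, Set.mem_singleton_iff] at *
    rcases hx with rfl | rfl
    · tauto
    · tauto
  have halt : alternatingGroup (Fin (m+2)) ≤
      Subgroup.closure ({a, b} : Set (Equiv.Perm (Fin (m+2)))) := by
    intro g hg
    have hgtop : g ∈ Subgroup.closure
        ({a, b, Equiv.swap ((0:ℕ) : Fin (m+2)) ((1:ℕ) : Fin (m+2))} :
          Set (Equiv.Perm (Fin (m+2)))) := by
      rw [htop]; exact Subgroup.mem_top g
    have hp := coset_trick _ _ htt hNt ?_ g hgtop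
    rotate_left
    · intro s hs
      simp only [Set.mem_insert_iff, Set.mem_singleton_iff] at hs
      rcases hs with rfl | rfl | rfl
      · exact Or.inl haH
      · exact Or.inl hbH
      · right; rw [htt]; exact one_mem _
    rcases hp with h | h
    · exact h
    · exfalso
      have hsx : Equiv.Perm.sign
          (g * Equiv.swap ((0:ℕ) : Fin (m+2)) ((1:ℕ) : Fin (m+2))) = 1 :=
        Equiv.Perm.mem_alternatingGroup.mp (hHle h)
      rw [map_mul, Equiv.Perm.mem_alternatingGroup.mp hg,
        Equiv.Perm.sign_swap (hcne 0 1 (by omega) (by omega) (by omega))] at hsx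
      exact absurd hsx (by decide)
  have hclos1 : Subgroup.closure ({a, b} : Set (Equiv.Perm (Fin (m+2)))) =
      alternatingGroup (Fin (m+2)) := le_antisymm hHle halt
  -- ===== ncard of S =====
  have hvba0 : (b*a) ((0:ℕ) : Fin (m+2)) = ((2:ℕ) : Fin (m+2)) := by
    rw [Equiv.Perm.mul_apply, ha_0, hbc 1]
  have hvbalast : (b*a) ((m+1:ℕ) : Fin (m+2)) = ((0:ℕ) : Fin (m+2)) := by
    rw [Equiv.Perm.mul_apply, ha_ge (m+1) (by omega) (by omega), hbc (m+1),
      hcc (m+1+1) (0+(m+2)) (by omega), hcwrap]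
  have hiab0 : (a*b)⁻¹ ((0:ℕ) : Fin (m+2)) = ((0:ℕ) : Fin (m+2)) :=
    Equiv.Perm.inv_eq_iff_eq.mpr hab0.symm
  have hiab1 : (a*b)⁻¹ ((1:ℕ) : Fin (m+2)) = ((m+1:ℕ) : Fin (m+2)) :=
    Equiv.Perm.inv_eq_iff_eq.mpr hablast.symm
  have hiba0 : (b*a)⁻¹ ((0:ℕ) : Fin (m+2)) = ((m+1:ℕ) : Fin (m+2)) :=
    Equiv.Perm.inv_eq_iff_eq.mpr hvbalast.symm
  have pne : ∀ (p q : Equiv.Perm (Fin (m+2))) (k i j : ℕ),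
      p ((k:ℕ) : Fin (m+2)) = ((i:ℕ) : Fin (m+2)) →
      q ((k:ℕ) : Fin (m+2)) = ((j:ℕ) : Fin (m+2)) →
      i < m+2 → j < m+2 → i ≠ j → p ≠ q := by
    intro p q k i j hp hq hi hj hij h
    rw [h] at hp
    exact hcne i j hi hj hij (hp.symm.trans hq)
  have ne1 : a*b ≠ b*a := pne _ _ 0 0 2 hab0 hvba0 (by omega) (by omega) (by omega)
  have ne2 : a*b ≠ (a*b)⁻¹ := pne _ _ 1 3 (m+1) hab1 hiab1 (by omega) (by omega) (by omega)
  have ne3 : a*b ≠ (b*a)⁻¹ := pne _ _ 0 0 (m+1) hab0 hiba0 (by omega) (by omega) (by omega)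
  have ne4 : b*a ≠ (a*b)⁻¹ := pne _ _ 0 2 0 hvba0 hiab0 (by omega) (by omega) (by omega)
  have ne5 : b*a ≠ (b*a)⁻¹ := pne _ _ 0 2 (m+1) hvba0 hiba0 (by omega) (by omega) (by omega)
  have ne6 : (a*b)⁻¹ ≠ (b*a)⁻¹ := fun h => ne1 (inv_injective h)
  have hnm1 : a*b ∉ ({b*a, (a*b)⁻¹, (b*a)⁻¹} : Set (Equiv.Perm (Fin (m+2)))) := by
    simp only [Set.mem_insert_iff, Set.mem_singleton_iff]
    push_neg
    exact ⟨ne1, ne2, ne3⟩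
  have hnm2 : b*a ∉ ({(a*b)⁻¹, (b*a)⁻¹} : Set (Equiv.Perm (Fin (m+2)))) := by
    simp only [Set.mem_insert_iff, Set.mem_singleton_iff]
    push_neg
    exact ⟨ne4, ne5⟩
  have hncard : S.ncard = 4 := by
    rw [hS, Set.ncard_insert_of_notMem hnm1, Set.ncard_insert_of_notMem hnm2,
      Set.ncard_pair ne6]
  -- ===== closure S =====
  have memuS : a*b ∈ S := by rw [hS]; exact Set.mem_insert _ _
  have memvS : b*a ∈ S := by rw [hS]; simp
  have memuiS : (a*b)⁻¹ ∈ S := by rw [hS]; simp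
  have memviS : (b*a)⁻¹ ∈ S := by rw [hS]; simp
  have hsignS : ∀ p ∈ S, Equiv.Perm.sign p = 1 := by
    intro p hp
    rw [hS] at hp
    simp only [Set.mem_insert_iff, Set.mem_singleton_iff] at hp
    rcases hp with rfl | rfl | rfl | rfl <;> simp [map_mul, hsa, hsb]
  have hb2e : (b*a)*(a*b) = b^2 := by
    rw [show (b*a)*(a*b) = b*(a*a)*b from by group, haa, mul_one, pow_two]
  have hbpow2 : ∀ G : Subgroup (Equiv.Perm (Fin (m+2))), b^2 ∈ G → b ∈ G := by
    intro G hG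
    have e4 : (b^2)^(r+1) = b := by
      rw [← pow_mul, show 2*(r+1) = (m+2)+1 from by omega, pow_succ, hbn, one_mul]
    rw [← e4]
    exact pow_mem hG _
  have hbS : b ∈ Subgroup.closure S := by
    apply hbpow2
    rw [← hb2e]
    exact mul_mem (Subgroup.subset_closure memvS) (Subgroup.subset_closure memuS)
  have haS : a ∈ Subgroup.closure S := by
    have e : (a*b) * b⁻¹ = a := by group
    rw [← e]
    exact mul_mem (Subgroup.subset_closure memuS) (inv_mem hbS)
  have hclosS : Subgroup.closure S = alternatingGroup (Fin (m+2)) := by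
    apply le_antisymm
    · refine (Subgroup.closure_le _).mpr ?_
      intro p hp
      exact SetLike.mem_coe.mpr (Equiv.Perm.mem_alternatingGroup.mpr (hsignS p hp))
    · rw [← hclos1]
      refine (Subgroup.closure_le _).mpr ?_
      intro p hp
      simp only [Set.mem_insert_iff, Set.mem_singleton_iff] at hp
      rcases hp with rfl | rfl
      · exact SetLike.mem_coe.mpr haS
      · exact SetLike.mem_coe.mpr hbS
  -- ===== closure (S * S) =====
  have hbSS : b ∈ Subgroup.closure (S * S) := by
    apply hbpow2
    rw [← hb2e]
    exact Subgroup.subset_closure (Set.mul_mem_mul memvS memuS)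
  have hsSS : (a*b)*(b*a)⁻¹ ∈ Subgroup.closure (S * S) :=
    Subgroup.subset_closure (Set.mul_mem_mul memuS memviS)
  have hbK : b ∈ Subgroup.closure ({b, (a*b)*(b*a)⁻¹} : Set (Equiv.Perm (Fin (m+2)))) :=
    Subgroup.subset_closure (Set.mem_insert _ _)
  have hsK : (a*b)*(b*a)⁻¹ ∈
      Subgroup.closure ({b, (a*b)*(b*a)⁻¹} : Set (Equiv.Perm (Fin (m+2)))) :=
    Subgroup.subset_closure (Set.mem_insert_of_mem _ rfl)
  have hKle : Subgroup.closure ({b, (a*b)*(b*a)⁻¹} : Set (Equiv.Perm (Fin (m+2)))) ≤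
      Subgroup.closure (S * S) := by
    refine (Subgroup.closure_le _).mpr ?_
    intro p hp
    simp only [Set.mem_insert_iff, Set.mem_singleton_iff] at hp
    rcases hp with rfl | rfl
    · exact SetLike.mem_coe.mpr hbSS
    · exact SetLike.mem_coe.mpr hsSS
  have hcan : ∀ x : Equiv.Perm (Fin (m+2)), a * (a * x) = x := fun x => by
    rw [← mul_assoc, haa, one_mul]
  have hNa : ∀ h ∈ Subgroup.closure ({b, (a*b)*(b*a)⁻¹} : Set (Equiv.Perm (Fin (m+2)))),
      a * h * a ∈ Subgroup.closure ({b, (a*b)*(b*a)⁻¹} : Set (Equiv.Perm (Fin (m+2)))) := by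
    apply norm_of_gens _ haa
    intro s hs
    simp only [Set.mem_insert_iff, Set.mem_singleton_iff] at hs
    rcases hs with h | h <;> rw [h]
    · have e : a*b*a = ((a*b)*(b*a)⁻¹)*b := by
        rw [mul_inv_rev, hainv]; group
      rw [e]
      exact mul_mem hsK hbK
    · have e : a * ((a*b)*(b*a)⁻¹) * a = ((a*b)*(b*a)⁻¹)⁻¹ := by
        simp only [mul_inv_rev, inv_inv, hainv, mul_assoc, hcan]
      rw [e]
      exact inv_mem hsK
  have hpa := coset_trick _ _ haa hNa
    (S := ({a, b} : Set (Equiv.Perm (Fin (m+2))))) ?_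
  rotate_left
  · intro s hs
    simp only [Set.mem_insert_iff, Set.mem_singleton_iff] at hs
    rcases hs with rfl | rfl
    · right; rw [haa]; exact one_mem _
    · exact Or.inl hbK
  have hcK : a*b ∈ Subgroup.closure ({b, (a*b)*(b*a)⁻¹} : Set (Equiv.Perm (Fin (m+2)))) := by
    rcases hpa (a*b) (mul_mem haH hbH) with h | h
    · exact h
    · have h2 := hNa _ h
      have h3 := mul_mem h h2
      have e3 : ((a*b)*a) * (a * ((a*b)*a) * a) = (a*b)^2 := by
        rw [pow_two]
        simp only [mul_assoc, hcan, haa, mul_one]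
      rw [e3] at h3
      have e4 : ((a*b)^2)^r = a*b := by
        rw [← pow_mul, show 2*r = m+1 from by omega, pow_succ, hpowm, one_mul]
      have h4 := pow_mem h3 r
      rwa [e4] at h4
  have haK : a ∈ Subgroup.closure ({b, (a*b)*(b*a)⁻¹} : Set (Equiv.Perm (Fin (m+2)))) := by
    have e : (a*b) * b⁻¹ = a := by group
    have h5 := mul_mem hcK (inv_mem hbK)
    rwa [e] at h5
  have hclosSS : Subgroup.closure (S * S) = alternatingGroup (Fin (m+2)) := by
    apply le_antisymm
    · refine (Subgroup.closure_le _).mpr ?_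
      rintro p ⟨x, hx, y, hy, rfl⟩
      exact SetLike.mem_coe.mpr (Equiv.Perm.mem_alternatingGroup.mpr
        (by rw [map_mul, hsignS x hx, hsignS y hy, one_mul]))
    · rw [← hclos1]
      refine (Subgroup.closure_le _).mpr ?_
      intro p hp
      simp only [Set.mem_insert_iff, Set.mem_singleton_iff] at hp
      rcases hp with rfl | rfl
      · exact SetLike.mem_coe.mpr (hKle haK)
      · exact SetLike.mem_coe.mpr hbSS
  exact ⟨part1, part2, part3, part4, hclos1, hncard, hclosS, hclosSS⟩
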